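/- arXiv:1910.04833 — 2 statements merged into one kernel-verified Lean document; each statement's English description precedes it below -/
import Mathlib

section
/- For positive definite n×n matrices A and B with trace one (density matrices), 2Tr((A^(1/2) B A^(1/2))^(1/2)) ≤ Tr(A)^(1/2)Tr(B)^(1/2) + Tr(A^(1/2)B^(1/2)) ≤ (1/2)Tr(A+B) + Tr(A^(1/2)B^(1/2)). -/
open Matrix ComplexOrder

/-- Matrix power via functional calculus (spectral decomposition), for Hermitian matrices. -/
noncomputable def mpow {n : Type*} [Fintype n] [DecidableEq n]
    (A : Matrix n n ℂ) (p : ℝ) : Matrix n n ℂ :=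
  if hA : A.IsHermitian then
    (hA.eigenvectorUnitary : Matrix n n ℂ) *
      Matrix.diagonal (fun i => ((hA.eigenvalues i ^ p : ℝ) : ℂ)) *
      star (hA.eigenvectorUnitary : Matrix n n ℂ)
  else 0

/-- Hellinger distance. -/
noncomputable def dh {n : Type*} [Fintype n] [DecidableEq n]
    (A B : Matrix n n ℂ) : ℝ :=
  Real.sqrt ((Matrix.trace (A + B)).re
    - 2 * (Matrix.trace (mpow A (1/2) * mpow B (1/2))).re)

/-- Bures–Wasserstein distance. -/
noncomputable def db {n : Type*} [Fintype n] [DecidableEq n]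
    (A B : Matrix n n ℂ) : ℝ :=
  Real.sqrt ((Matrix.trace (A + B)).re
    - 2 * (Matrix.trace (mpow (mpow A (1/2) * B * mpow A (1/2)) (1/2))).re)

/-- Log-determinant distance. -/
noncomputable def dl {n : Type*} [Fintype n] [DecidableEq n]
    (A B : Matrix n n ℂ) : ℝ :=
  Real.log (((A + B) / 2).det).re
    - (1/2) * (Real.log (A.det.re) + Real.log (B.det.re))

/-- Matrix power mean μ_p(t;A,B) = (t A^p + (1-t) B^p)^{1/p}. -/
noncomputable def mpm {n : Type*} [Fintype n] [DecidableEq n]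
    (p t : ℝ) (A B : Matrix n n ℂ) : Matrix n n ℂ :=
  mpow ((t : ℂ) • mpow A p + ((1 - t : ℝ) : ℂ) • mpow B p) (1/p)

/-- Weighted geometric mean A ♯_t B. -/
noncomputable def sharp {n : Type*} [Fintype n] [DecidableEq n]
    (t : ℝ) (A B : Matrix n n ℂ) : Matrix n n ℂ :=
  mpow A (1/2) * mpow (mpow A (-(1/2)) * B * mpow A (-(1/2))) t * mpow A (1/2)

/-- Quantum fidelity. -/
noncomputable def fid {n : Type*} [Fintype n] [DecidableEq n]
    (A B : Matrix n n ℂ) : ℝ :=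
  ((Matrix.trace (mpow (mpow A (1/2) * B * mpow A (1/2)) (1/2))).re) ^ 2

section Aux

variable {n : Type*} [Fintype n] [DecidableEq n]

private lemma emb_inner (X Y : Matrix n n ℂ) :
    (inner ℂ ((WithLp.equiv 2 ((n × n) → ℂ)).symm (fun p => X p.1 p.2))
      ((WithLp.equiv 2 ((n × n) → ℂ)).symm (fun p => Y p.1 p.2)) : ℂ)
      = Matrix.trace (Xᴴ * Y) := by
  simp only [PiLp.inner_apply, RCLike.inner_apply, Matrix.trace, Matrix.diag_apply,
    Matrix.mul_apply, Matrix.conjTranspose_apply, WithLp.equiv_symm_apply, PiLp.toLp_apply]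
  rw [Fintype.sum_prod_type, Finset.sum_comm]
  exact Finset.sum_congr rfl fun _ _ => Finset.sum_congr rfl fun _ _ => mul_comm _ _

private lemma trace_sq_re_nonneg (X : Matrix n n ℂ) : 0 ≤ (Matrix.trace (Xᴴ * X)).re := by
  rw [← emb_inner]
  have := @inner_self_nonneg ℂ _ _ _ _
    ((WithLp.equiv 2 ((n × n) → ℂ)).symm (fun p => X p.1 p.2))
  simpa using this

private lemma trace_cs (X Y : Matrix n n ℂ) :
    (Matrix.trace (Xᴴ * Y)).re ≤
      Real.sqrt ((Matrix.trace (Xᴴ * X)).re * (Matrix.trace (Yᴴ * Y)).re) := by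
  rw [← emb_inner, ← emb_inner, ← emb_inner]
  set x : EuclideanSpace ℂ (n × n) := (WithLp.equiv 2 ((n × n) → ℂ)).symm (fun p => X p.1 p.2)
  set y : EuclideanSpace ℂ (n × n) := (WithLp.equiv 2 ((n × n) → ℂ)).symm (fun p => Y p.1 p.2)
  calc (inner ℂ x y : ℂ).re ≤ ‖(inner ℂ x y : ℂ)‖ := Complex.re_le_norm _
    _ ≤ ‖x‖ * ‖y‖ := norm_inner_le_norm _ _
    _ = Real.sqrt ((inner ℂ x x : ℂ).re * (inner ℂ y y : ℂ).re) := by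
        rw [norm_eq_sqrt_re_inner (𝕜 := ℂ), norm_eq_sqrt_re_inner (𝕜 := ℂ),
          ← Real.sqrt_mul inner_self_nonneg]
        simp [RCLike.re_to_complex]

private lemma posDef_conj {M P : Matrix n n ℂ} (hM : M.PosDef) (hP : IsUnit P) :
    (Pᴴ * M * P).PosDef := by
  exact hM.conjTranspose_mul_mul_same (Matrix.mulVec_injective_iff_isUnit.mpr hP)

private lemma mpow_half_posDef {A : Matrix n n ℂ} (hA : A.PosDef) : (mpow A (1/2)).PosDef := by
  rw [mpow, dif_pos hA.1]
  set U : Matrix n n ℂ := (hA.1.eigenvectorUnitary : Matrix n n ℂ) with hU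
  have h1 : star U * U = 1 := Unitary.coe_star_mul_self _
  have h2 : U * star U = 1 := Unitary.coe_mul_star_self _
  have hD : (Matrix.diagonal (fun i => ((hA.1.eigenvalues i ^ (1/2 : ℝ) : ℝ) : ℂ))).PosDef := by
    rw [posDef_diagonal_iff]
    intro i
    exact Complex.zero_lt_real.mpr (Real.rpow_pos_of_pos (hA.eigenvalues_pos i) _)
  have hUu : IsUnit (star U) := ⟨⟨star U, U, h1, h2⟩, rfl⟩
  have := posDef_conj hD hUu
  simpa [Matrix.star_eq_conjTranspose] using this

private lemma mpow_half_mul_self {A : Matrix n n ℂ} (hA : A.PosDef) :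
    mpow A (1/2) * mpow A (1/2) = A := by
  rw [mpow, dif_pos hA.1]
  set U : Matrix n n ℂ := (hA.1.eigenvectorUnitary : Matrix n n ℂ) with hU
  set D : Matrix n n ℂ := Matrix.diagonal (fun i => ((hA.1.eigenvalues i ^ (1/2 : ℝ) : ℝ) : ℂ))
    with hDdef
  have h1 : star U * U = 1 := Unitary.coe_star_mul_self _
  have hD : D * D = Matrix.diagonal (fun i => ((hA.1.eigenvalues i : ℝ) : ℂ)) := by
    rw [hDdef, Matrix.diagonal_mul_diagonal]
    exact congrArg Matrix.diagonal (funext fun i => by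
      rw [← Complex.ofReal_mul, ← Real.rpow_add (hA.eigenvalues_pos i)]
      norm_num)
  calc U * D * star U * (U * D * star U)
      = U * (D * ((star U * U) * (D * star U))) := by simp only [Matrix.mul_assoc]
    _ = U * ((D * D) * star U) := by rw [h1, Matrix.one_mul, Matrix.mul_assoc]
    _ = A := by
        rw [hD]
        conv_rhs => rw [hA.1.spectral_theorem, Unitary.conjStarAlgAut_apply]
        simp only [Matrix.mul_assoc]
        rfl

end Aux

theorem stmt8 {n : Type*} [Fintype n] [DecidableEq n]
    {A B : Matrix n n ℂ} (hA : A.PosDef) (hB : B.PosDef)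
    (hA1 : Matrix.trace A = 1) (hB1 : Matrix.trace B = 1) :
    2 * (Matrix.trace (mpow (mpow A (1/2) * B * mpow A (1/2)) (1/2))).re
      ≤ Real.sqrt (Matrix.trace A).re * Real.sqrt (Matrix.trace B).re
          + (Matrix.trace (mpow A (1/2) * mpow B (1/2))).re
    ∧ Real.sqrt (Matrix.trace A).re * Real.sqrt (Matrix.trace B).re
          + (Matrix.trace (mpow A (1/2) * mpow B (1/2))).re
      ≤ (1/2) * (Matrix.trace (A + B)).re
          + (Matrix.trace (mpow A (1/2) * mpow B (1/2))).re := by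
  set R := mpow A (1/2) with hRdef
  set Q := mpow B (1/2) with hQdef
  have hR : R.PosDef := mpow_half_posDef hA
  have hQ : Q.PosDef := mpow_half_posDef hB
  have hRH : Rᴴ = R := hR.1
  have hQH : Qᴴ = Q := hQ.1
  have hRR : R * R = A := mpow_half_mul_self hA
  have hQQ : Q * Q = B := mpow_half_mul_self hB
  have hC : (R * B * R).PosDef := by
    have := posDef_conj hB hR.isUnit
    rwa [hRH] at this
  set S := mpow (R * B * R) (1/2) with hSdef
  have hS : S.PosDef := mpow_half_posDef hC
  have hSS : S * S = R * (B * R) := by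
    rw [mpow_half_mul_self hC, Matrix.mul_assoc]
  have hSH : Sᴴ = S := hS.1
  have hSdet : IsUnit S.det := (Matrix.isUnit_iff_isUnit_det S).mp hS.isUnit
  have hSiS : S⁻¹ * S = 1 := Matrix.nonsing_inv_mul S hSdet
  have hSSi : S * S⁻¹ = 1 := Matrix.mul_nonsing_inv S hSdet
  have hSiH : (S⁻¹)ᴴ = S⁻¹ := by rw [Matrix.conjTranspose_nonsing_inv, hSH]
  set R2 := mpow R (1/2) with hR2def
  set Q2 := mpow Q (1/2) with hQ2def
  have hR2H : R2ᴴ = R2 := (mpow_half_posDef hR).1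
  have hQ2H : Q2ᴴ = Q2 := (mpow_half_posDef hQ).1
  have hR2R2 : R2 * R2 = R := mpow_half_mul_self hR
  have hQ2Q2 : Q2 * Q2 = Q := mpow_half_mul_self hQ
  obtain ⟨V, hVdef⟩ : ∃ V, V = Q * (R * S⁻¹) := ⟨_, rfl⟩
  have hVH : Vᴴ = S⁻¹ * (R * Q) := by
    rw [hVdef]
    simp only [Matrix.conjTranspose_mul, hSiH, hRH, hQH, Matrix.mul_assoc]
  -- right-associated rewriting helpers
  have eQ : ∀ Z : Matrix n n ℂ, Q * (Q * Z) = B * Z := fun Z => by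
    rw [← Matrix.mul_assoc, hQQ]
  have eQ2 : ∀ Z : Matrix n n ℂ, Q2 * (Q2 * Z) = Q * Z := fun Z => by
    rw [← Matrix.mul_assoc, hQ2Q2]
  have eSi : ∀ Z : Matrix n n ℂ, S⁻¹ * (S * Z) = Z := fun Z => by
    rw [← Matrix.mul_assoc, hSiS, Matrix.one_mul]
  have hVHV : Vᴴ * V = 1 := by
    rw [hVH, hVdef]
    simp only [Matrix.mul_assoc]
    simp only [eQ]
    have : R * (B * (R * S⁻¹)) = S * (S * S⁻¹) := by
      calc R * (B * (R * S⁻¹)) = (R * (B * R)) * S⁻¹ := by simp only [Matrix.mul_assoc]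
        _ = S * (S * S⁻¹) := by rw [← hSS, Matrix.mul_assoc]
    rw [this, eSi, hSSi]
  have hVVH : V * Vᴴ = 1 := mul_eq_one_comm.mp hVHV
  have eV : ∀ Z : Matrix n n ℂ, V * (Vᴴ * Z) = Z := fun Z => by
    rw [← Matrix.mul_assoc, hVVH, Matrix.one_mul]
  obtain ⟨X, hXdef⟩ : ∃ X, X = Q2 * (V * R2) := ⟨_, rfl⟩
  obtain ⟨Y, hYdef⟩ : ∃ Y, Y = Q2 * R2 := ⟨_, rfl⟩
  have hXH : Xᴴ = R2 * (Vᴴ * Q2) := by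
    rw [hXdef]
    simp only [Matrix.conjTranspose_mul, hR2H, hQ2H, Matrix.mul_assoc]
  obtain ⟨P, hPdef⟩ : ∃ P, P = Vᴴ * (Q * V) := ⟨_, rfl⟩
  have hPH : Pᴴ = P := by
    rw [hPdef]
    simp only [Matrix.conjTranspose_mul, hQH, Matrix.conjTranspose_conjTranspose,
      Matrix.mul_assoc]
  -- trace identities
  have t1 : Matrix.trace (Xᴴ * Y) = Matrix.trace S := by
    rw [hXH, hYdef]
    simp only [Matrix.mul_assoc]
    rw [Matrix.trace_mul_comm]
    simp only [Matrix.mul_assoc, eQ2]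
    rw [hR2R2, hVH]
    simp only [Matrix.mul_assoc, eQ]
    have : R * (B * R) = S * S := hSS.symm
    rw [this, eSi]
  have t2 : Matrix.trace (Xᴴ * X) = Matrix.trace (Pᴴ * R) := by
    rw [hXH, hXdef, hPH, hPdef]

    simp only [Matrix.mul_assoc]
    rw [Matrix.trace_mul_comm]
    simp only [Matrix.mul_assoc, eQ2]
    rw [hR2R2]
  have t3 : Matrix.trace (Pᴴ * P) = Matrix.trace B := by
    rw [hPH, hPdef]
    simp only [Matrix.mul_assoc, eV, eQ]
    rw [Matrix.trace_mul_comm]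
    simp only [Matrix.mul_assoc]
    rw [hVVH, Matrix.mul_one]
  have t4 : Matrix.trace (Rᴴ * R) = Matrix.trace A := by rw [hRH, hRR]
  have t5 : Matrix.trace (Yᴴ * Y) = Matrix.trace (R * Q) := by
    rw [hYdef]
    simp only [Matrix.conjTranspose_mul, hR2H, hQ2H, Matrix.mul_assoc]
    simp only [eQ2]
    rw [Matrix.trace_mul_comm]
    simp only [Matrix.mul_assoc]
    rw [hR2R2, Matrix.trace_mul_comm]
  -- numeric facts
  set a := (Matrix.trace (R * Q)).re with hadef
  have ha0 : 0 ≤ a := by rw [hadef, ← t5]; exact trace_sq_re_nonneg Y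
  have hc : (Matrix.trace (Pᴴ * R)).re ≤ 1 := by
    have h := trace_cs P R
    rw [t3, t4, hB1, hA1] at h
    simpa using h
  have hc0 : 0 ≤ (Matrix.trace (Pᴴ * R)).re := by
    rw [← t2]; exact trace_sq_re_nonneg X
  have hT : (Matrix.trace S).re ≤ Real.sqrt a := by
    have h := trace_cs X Y
    rw [t1, t2, t5, ← hadef] at h
    have h2 : (Matrix.trace (Pᴴ * R)).re * a ≤ a := by nlinarith
    exact h.trans (Real.sqrt_le_sqrt h2)
  have key : 2 * (Matrix.trace S).re ≤ 1 + a := by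
    nlinarith [Real.sq_sqrt ha0, Real.sqrt_nonneg a, sq_nonneg (Real.sqrt a - 1)]
  constructor
  · rw [hA1, hB1]
    simpa using key
  · rw [hA1, hB1, Matrix.trace_add, hA1, hB1]
    norm_num
end

section
/- For positive definite n×n matrices A and B, the function t ↦ d_l(A, A♯_t B) is monotonically increasing on [0,1], where A♯_t B = A^(1/2)(A^(-1/2)BA^(-1/2))^t A^(1/2) is the weighted geometric mean and d_l is the Log-Determinant metric. -/
open Matrix ComplexOrder

/-! ### Auxiliary lemmas -/

lemma key_scalar {lam : ℝ} (hl : 0 < lam) {t s : ℝ} (ht : 0 ≤ t) (hts : t ≤ s) :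
    Real.log (1 + lam ^ t) - (1/2) * Real.log (lam ^ t)
      ≤ Real.log (1 + lam ^ s) - (1/2) * Real.log (lam ^ s) := by
  have hs0 : 0 ≤ s := le_trans ht hts
  have hu0 : (0:ℝ) < lam ^ ((s - t)/2) := Real.rpow_pos_of_pos hl _
  have hv0 : (0:ℝ) < lam ^ ((s + t)/2) := Real.rpow_pos_of_pos hl _
  have ht0 : (0:ℝ) < lam ^ t := Real.rpow_pos_of_pos hl _
  have hs0' : (0:ℝ) < lam ^ s := Real.rpow_pos_of_pos hl _
  have huv : lam ^ ((s - t)/2) * lam ^ ((s + t)/2) = lam ^ s := by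
    rw [← Real.rpow_add hl]; ring_nf
  have htu : lam ^ t * lam ^ ((s - t)/2) = lam ^ ((s + t)/2) := by
    rw [← Real.rpow_add hl]; ring_nf
  have hkey : lam ^ ((s - t)/2) + lam ^ ((s + t)/2) ≤ 1 + lam ^ s := by
    rw [← huv]
    rcases le_total 1 lam with h1 | h1
    · have h2 : 1 ≤ lam ^ ((s - t)/2) := Real.one_le_rpow h1 (by linarith)
      have h3 : 1 ≤ lam ^ ((s + t)/2) := Real.one_le_rpow h1 (by linarith)
      nlinarith
    · have h2 : lam ^ ((s - t)/2) ≤ 1 := Real.rpow_le_one hl.le h1 (by linarith)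
      have h3 : lam ^ ((s + t)/2) ≤ 1 := Real.rpow_le_one hl.le h1 (by linarith)
      nlinarith
  have hmul : (1 + lam ^ t) * lam ^ ((s - t)/2) ≤ 1 + lam ^ s := by
    calc (1 + lam ^ t) * lam ^ ((s - t)/2)
        = lam ^ ((s - t)/2) + lam ^ t * lam ^ ((s - t)/2) := by ring
      _ = lam ^ ((s - t)/2) + lam ^ ((s + t)/2) := by rw [htu]
      _ ≤ 1 + lam ^ s := hkey
  have hlog := Real.log_le_log (by positivity) hmul
  rw [Real.log_mul (by positivity) (by positivity), Real.log_rpow hl] at hlog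
  rw [Real.log_rpow hl, Real.log_rpow hl]
  nlinarith [hlog]

section Aux

variable {n : Type*} [Fintype n] [DecidableEq n]

lemma mpow_eq {A : Matrix n n ℂ} (hA : A.IsHermitian) (p : ℝ) :
    mpow A p = (hA.eigenvectorUnitary : Matrix n n ℂ) *
      Matrix.diagonal (fun i => ((hA.eigenvalues i ^ p : ℝ) : ℂ)) *
      star (hA.eigenvectorUnitary : Matrix n n ℂ) := by
  rw [mpow, dif_pos hA]

lemma star_mul_self_eig {A : Matrix n n ℂ} (hA : A.IsHermitian) :
    star (hA.eigenvectorUnitary : Matrix n n ℂ) * (hA.eigenvectorUnitary : Matrix n n ℂ) = 1 :=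
  Unitary.coe_star_mul_self hA.eigenvectorUnitary

lemma mul_star_self_eig {A : Matrix n n ℂ} (hA : A.IsHermitian) :
    (hA.eigenvectorUnitary : Matrix n n ℂ) * star (hA.eigenvectorUnitary : Matrix n n ℂ) = 1 :=
  Unitary.coe_mul_star_self hA.eigenvectorUnitary

lemma mpow_mul_mpow {A : Matrix n n ℂ} (hA : A.PosDef) (p q : ℝ) :
    mpow A p * mpow A q = mpow A (p + q) := by
  have h := hA.isHermitian
  rw [mpow_eq h, mpow_eq h, mpow_eq h]
  have hc : ∀ X : Matrix n n ℂ,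
      star (h.eigenvectorUnitary : Matrix n n ℂ) * ((h.eigenvectorUnitary : Matrix n n ℂ) * X) = X := by
    intro X; rw [← mul_assoc, star_mul_self_eig h, one_mul]
  simp only [mul_assoc, hc]
  congr 1
  rw [← mul_assoc, diagonal_mul_diagonal]
  have hd : (fun i => ((h.eigenvalues i ^ p : ℝ) : ℂ) * ((h.eigenvalues i ^ q : ℝ) : ℂ))
      = fun i => ((h.eigenvalues i ^ (p + q) : ℝ) : ℂ) := by
    funext i
    rw [← Complex.ofReal_mul, ← Real.rpow_add (hA.eigenvalues_pos i)]
  rw [hd]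

lemma mpow_one' {A : Matrix n n ℂ} (hA : A.IsHermitian) : mpow A 1 = A := by
  rw [mpow_eq hA]
  simp only [Real.rpow_one]
  exact hA.spectral_theorem.symm

lemma mpow_zero' {A : Matrix n n ℂ} (hA : A.IsHermitian) : mpow A 0 = 1 := by
  rw [mpow_eq hA]
  simp only [Real.rpow_zero, Complex.ofReal_one, diagonal_one, mul_one]
  exact mul_star_self_eig hA

lemma mpow_isHermitian (A : Matrix n n ℂ) (p : ℝ) : (mpow A p).IsHermitian := by
  unfold mpow
  split
  · next hA =>
    exact isHermitian_mul_mul_conjTranspose _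
      (isHermitian_diagonal_iff.mpr fun i => by
        simp [_root_.IsSelfAdjoint, Complex.conj_ofReal])
  · exact isHermitian_zero

lemma posdef_conj {B M N : Matrix n n ℂ} (hB : B.PosDef) (hMN : N * M = 1) :
    (Mᴴ * B * M).PosDef := by
  refine PosDef.of_dotProduct_mulVec_pos (isHermitian_conjTranspose_mul_mul M hB.1) fun x hx => ?_
  have hx' : M *ᵥ x ≠ 0 := by
    intro h
    apply hx
    have := congrArg (fun v => N *ᵥ v) h
    simpa [mulVec_mulVec, hMN] using this
  simpa only [star_mulVec, dotProduct_mulVec, vecMul_vecMul] using hB.dotProduct_mulVec_pos hx'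

lemma half_eq_smul (X : Matrix n n ℂ) : X / 2 = (2⁻¹ : ℂ) • X := by
  rw [div_eq_mul_inv]
  have h2 : (2 : Matrix n n ℂ)⁻¹ = (2⁻¹ : ℂ) • 1 := by
    apply inv_eq_right_inv
    rw [Matrix.mul_smul, mul_one]
    have h : (2 : Matrix n n ℂ) = (2 : ℂ) • 1 := by
      rw [smul_eq_diagonal_mul, mul_one, diagonal_ofNat]
    rw [h, smul_smul]
    norm_num
  rw [h2, Matrix.mul_smul, mul_one]

lemma det_conj_diag {A H V : Matrix n n ℂ} (hH : H * H = A)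
    (hV : V * star V = 1) (f : n → ℝ) :
    (H * (V * diagonal (fun i => ((f i : ℝ) : ℂ)) * star V) * H).det
      = A.det * ((∏ i, f i : ℝ) : ℂ) := by
  have h1 : V.det * (star V).det = 1 := by rw [← det_mul, hV, det_one]
  have h2 : H.det * H.det = A.det := by rw [← det_mul, hH]
  simp only [det_mul, det_diagonal]
  push_cast
  calc H.det * ((V.det * ∏ i, ((f i : ℝ) : ℂ)) * (star V).det) * H.det
      = (H.det * H.det) * ((V.det * (star V).det) * ∏ i, ((f i : ℝ) : ℂ)) := by ring
    _ = A.det * ∏ i, ((f i : ℝ) : ℂ) := by rw [h1, h2, one_mul]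

end Aux

theorem stmt14 {n : Type*} [Fintype n] [DecidableEq n]
    {A B : Matrix n n ℂ} (hA : A.PosDef) (hB : B.PosDef)
    {t s : ℝ} (ht : 0 ≤ t) (hts : t ≤ s) (hs : s ≤ 1) :
    dl A (sharp t A B) ≤ dl A (sharp s A B) := by
  have hAh := hA.isHermitian
  set H := mpow A (1/2 : ℝ) with hHdef
  set Hi := mpow A (-(1/2) : ℝ) with hHidef
  have hHH : H * H = A := by
    rw [hHdef, mpow_mul_mpow hA]; norm_num [mpow_one' hAh]
  have hHHi : H * Hi = 1 := by
    rw [hHdef, hHidef, mpow_mul_mpow hA]; norm_num [mpow_zero' hAh]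
  have hHih : Hi.IsHermitian := mpow_isHermitian _ _
  have hC : (Hi * B * Hi).PosDef := by
    have := posdef_conj (M := Hi) (N := H) hB hHHi
    rwa [hHih.eq] at this
  set lam := hC.isHermitian.eigenvalues with hlamdef
  set V := (hC.isHermitian.eigenvectorUnitary : Matrix n n ℂ) with hVdef
  have hlam : ∀ i, 0 < lam i := hC.eigenvalues_pos
  have hVV : V * star V = 1 := mul_star_self_eig hC.isHermitian
  -- representation of sharp
  have hrep : ∀ r : ℝ, sharp r A B
      = H * (V * diagonal (fun i => ((lam i ^ r : ℝ) : ℂ)) * star V) * H := by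
    intro r
    rw [sharp, mpow_eq hC.isHermitian]
  -- representation of A
  have hArep : A = H * (V * diagonal (fun i => ((1 : ℝ) : ℂ)) * star V) * H := by
    simp only [Complex.ofReal_one, diagonal_one, mul_one, hVV]
    rw [hHH]
  have haddrep : ∀ r : ℝ, A + sharp r A B
      = H * (V * diagonal (fun i => ((1 + lam i ^ r : ℝ) : ℂ)) * star V) * H := by
    intro r
    rw [hrep r]
    nth_rewrite 1 [hArep]
    rw [← Matrix.add_mul, ← Matrix.mul_add, ← Matrix.add_mul, ← Matrix.mul_add,
      diagonal_add]
    congr 4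
    funext i
    push_cast
    ring
  -- determinant values
  set dA : ℝ := ∏ i, hAh.eigenvalues i with hdAdef
  have hdApos : 0 < dA := Finset.prod_pos fun i _ => hA.eigenvalues_pos i
  have hdetA : A.det = ((dA : ℝ) : ℂ) := by
    rw [hAh.det_eq_prod_eigenvalues, hdAdef, Complex.ofReal_prod]
    rfl
  set N := Fintype.card n with hNdef
  have hdet_sharp : ∀ r : ℝ, ((sharp r A B).det).re = dA * ∏ i, lam i ^ r := by
    intro r
    rw [hrep r, det_conj_diag hHH hVV, hdetA, ← Complex.ofReal_mul, Complex.ofReal_re]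
  have hdet_add : ∀ r : ℝ, (((A + sharp r A B) / 2).det).re
      = (2⁻¹ : ℝ) ^ N * (dA * ∏ i, (1 + lam i ^ r)) := by
    intro r
    rw [half_eq_smul, det_smul, haddrep r, det_conj_diag hHH hVV, hdetA]
    have : ((2⁻¹ : ℂ) ^ N * (((dA : ℝ) : ℂ) * ((∏ i, (1 + lam i ^ r) : ℝ) : ℂ)))
        = (((2⁻¹ : ℝ) ^ N * (dA * ∏ i, (1 + lam i ^ r)) : ℝ) : ℂ) := by
      push_cast; ring
    rw [this, Complex.ofReal_re]
  -- positivity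
  have hP : ∀ r : ℝ, (0:ℝ) < ∏ i, (1 + lam i ^ r) := by
    intro r
    refine Finset.prod_pos fun i _ => ?_
    have := Real.rpow_pos_of_pos (hlam i) r
    linarith
  have hQ : ∀ r : ℝ, (0:ℝ) < ∏ i, lam i ^ r :=
    fun r => Finset.prod_pos fun i _ => Real.rpow_pos_of_pos (hlam i) r
  -- dl formula
  have hdl : ∀ r : ℝ, dl A (sharp r A B)
      = (Real.log ((2⁻¹ : ℝ) ^ N) + (Real.log dA + Real.log (∏ i, (1 + lam i ^ r))))
        - (1/2) * (Real.log dA + (Real.log dA + Real.log (∏ i, lam i ^ r))) := by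
    intro r
    rw [dl, hdet_add r, hdet_sharp r, hdetA, Complex.ofReal_re,
      Real.log_mul (by positivity) (mul_pos hdApos (hP r)).ne',
      Real.log_mul hdApos.ne' (hP r).ne',
      Real.log_mul hdApos.ne' (hQ r).ne']
  rw [hdl t, hdl s]
  have e : ∀ r : ℝ, Real.log (∏ i, (1 + lam i ^ r)) - (1/2) * Real.log (∏ i, lam i ^ r)
      = ∑ i, (Real.log (1 + lam i ^ r) - (1/2) * Real.log (lam i ^ r)) := by
    intro r
    rw [Real.log_prod (fun i _ => by
        have := Real.rpow_pos_of_pos (hlam i) r; positivity),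
      Real.log_prod (fun i _ => (Real.rpow_pos_of_pos (hlam i) r).ne'),
      Finset.mul_sum, ← Finset.sum_sub_distrib]
  have key : Real.log (∏ i, (1 + lam i ^ t)) - (1/2) * Real.log (∏ i, lam i ^ t)
      ≤ Real.log (∏ i, (1 + lam i ^ s)) - (1/2) * Real.log (∏ i, lam i ^ s) := by
    rw [e t, e s]
    exact Finset.sum_le_sum fun i _ => key_scalar (hlam i) ht hts
  linarith
end
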